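/- Let G be a group, Λ ≤ G a subgroup, and Ω = vC_G(Λ) the virtual centralizer of Λ in G. Then the virtual center vZ(Ω) is contained in the virtual center vZ(ΛΩ) of the subgroup ΛΩ. In particular, if ΛΩ is icc then Ω is either trivial or icc. -/
import Mathlib


open Pointwise in
/-- For Ω = vC_G(Λ) and H = ΛΩ, vZ(Ω) ⊆ vZ(H); in particular if H is icc then every
nontrivial element of Ω has infinite Ω-conjugacy orbit. -/
theorem stmt11 (G : Type*) [Group G] (Λ : Subgroup G)
    (Ω : Set G) (hΩ : Ω = {g : G | {x : G | ∃ l ∈ Λ, l * g * l⁻¹ = x}.Finite})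
    (H : Subgroup G) (hH : (H : Set G) = (Λ : Set G) * Ω) :
    ({g ∈ Ω | {x : G | ∃ s ∈ Ω, s * g * s⁻¹ = x}.Finite} ⊆
        {g : G | g ∈ H ∧ {x : G | ∃ h ∈ H, h * g * h⁻¹ = x}.Finite}) ∧
      ((∀ g ∈ H, g ≠ 1 → {x : G | ∃ h ∈ H, h * g * h⁻¹ = x}.Infinite) →
        ∀ g ∈ Ω, g ≠ 1 → {x : G | ∃ s ∈ Ω, s * g * s⁻¹ = x}.Infinite) := by
  have main : ∀ g ∈ Ω, {x : G | ∃ s ∈ Ω, s * g * s⁻¹ = x}.Finite →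
      g ∈ H ∧ {x : G | ∃ h ∈ H, h * g * h⁻¹ = x}.Finite := by
    intro g hg hfin
    have hgH : g ∈ H := by
      rw [← SetLike.mem_coe, hH]
      exact ⟨1, Λ.one_mem, g, hg, one_mul g⟩
    refine ⟨hgH, ?_⟩
    have key : {x : G | ∃ h ∈ H, h * g * h⁻¹ = x} ⊆
        ⋃ y ∈ {x : G | ∃ s ∈ Ω, s * g * s⁻¹ = x},
          {x : G | ∃ l ∈ Λ, l * y * l⁻¹ = x} := by
      rintro x ⟨h, hh, rfl⟩
      rw [← SetLike.mem_coe, hH] at hh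
      obtain ⟨a, ha, b, hb, rfl⟩ := hh
      refine Set.mem_biUnion ⟨b, hb, rfl⟩ ⟨a, ha, ?_⟩
      group
    refine Set.Finite.subset (hfin.biUnion ?_) key
    rintro y ⟨s, hs, rfl⟩
    have hsub : {x : G | ∃ l ∈ Λ, l * (s * g * s⁻¹) * l⁻¹ = x} ⊆
        Set.image2 (fun p q => p * q * p⁻¹)
          {x : G | ∃ l ∈ Λ, l * s * l⁻¹ = x} {x : G | ∃ l ∈ Λ, l * g * l⁻¹ = x} := by
      rintro x ⟨l, hl, rfl⟩
      exact ⟨l * s * l⁻¹, ⟨l, hl, rfl⟩, l * g * l⁻¹, ⟨l, hl, rfl⟩, by group⟩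
    have hsf : {x : G | ∃ l ∈ Λ, l * s * l⁻¹ = x}.Finite := by
      rw [hΩ] at hs; exact hs
    have hgf : {x : G | ∃ l ∈ Λ, l * g * l⁻¹ = x}.Finite := by
      rw [hΩ] at hg; exact hg
    exact (hsf.image2 _ hgf).subset hsub
  constructor
  · rintro g ⟨hg, hfin⟩
    exact main g hg hfin
  · intro hicc g hg hne
    by_contra h
    rw [Set.not_infinite] at h
    obtain ⟨hgH, hfinH⟩ := main g hg h
    exact hicc g hgH hne hfinH
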